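/- If P1, P2 ∈ SBrSNNI and L ⊆ A_L, then (Q1 ∥_L Q2)∖A_H ≈_b (R1 ∥_L R2)/A_H for all Q1, R1 ∈ reach(P1) and Q2, R2 ∈ reach(P2) such that Q1 ∥_L Q2 and R1 ∥_L R2 belong to reach(P1 ∥_L P2), Q1∖A_H ≈_b R1/A_H, and Q2∖A_H ≈_b R2/A_H. -/
import Mathlib


namespace SecurityNI

/-- Process terms: `0`, action prefix (`none` = τ, `some a` = observable action),
choice, CSP-style parallel composition with synchronization set, restriction,
hiding, and constants (whose defining equations are given by an environment). -/
inductive Proc (A : Type) (C : Type) : Type where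
  | nil : Proc A C
  | pre : Option A → Proc A C → Proc A C
  | choice : Proc A C → Proc A C → Proc A C
  | par : Set A → Proc A C → Proc A C → Proc A C
  | restrict : Proc A C → Set A → Proc A C
  | hide : Proc A C → Set A → Proc A C
  | const : C → Proc A C

variable {A C : Type}

/-- A process term is guarded when every constant occurrence is in the scope
of an action prefix operator. -/
def Guarded : Proc A C → Prop
  | .nil => True
  | .pre _ _ => True
  | .choice p q => Guarded p ∧ Guarded q
  | .par _ p q => Guarded p ∧ Guarded q
  | .restrict p _ => Guarded p
  | .hide p _ => Guarded p
  | .const _ => False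

/-- Operational semantics, parameterized by the defining equations `env` of
the constants.  Labels are `Option A`, with `none` playing the role of τ. -/
inductive Trans (env : C → Proc A C) : Proc A C → Option A → Proc A C → Prop where
  | pre (a : Option A) (p : Proc A C) : Trans env (.pre a p) a p
  | choiceL {p q a p'} (h : Trans env p a p') : Trans env (.choice p q) a p'
  | choiceR {p q a q'} (h : Trans env q a q') : Trans env (.choice p q) a q'
  | parL {L p q a p'} (h : Trans env p a p') (hn : ∀ x, a = some x → x ∉ L) :
      Trans env (.par L p q) a (.par L p' q)
  | parR {L p q a q'} (h : Trans env q a q') (hn : ∀ x, a = some x → x ∉ L) :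
      Trans env (.par L p q) a (.par L p q')
  | sync {L p q x p' q'} (h1 : Trans env p (some x) p') (h2 : Trans env q (some x) q')
      (hx : x ∈ L) : Trans env (.par L p q) (some x) (.par L p' q')
  | res {p a p' L} (h : Trans env p a p') (hn : ∀ x, a = some x → x ∉ L) :
      Trans env (.restrict p L) a (.restrict p' L)
  | hideIn {p x p' L} (h : Trans env p (some x) p') (hx : x ∈ L) :
      Trans env (.hide p L) none (.hide p' L)
  | hideOut {p a p' L} (h : Trans env p a p') (hn : ∀ x, a = some x → x ∉ L) :
      Trans env (.hide p L) a (.hide p' L)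
  | const {c a p'} (h : Trans env (env c) a p') : Trans env (.const c) a p'

section LTS

variable {S : Type} (tr : S → Option A → S → Prop)

/-- Finitely many (possibly zero) τ-transitions. -/
def TauStar : S → S → Prop :=
  Relation.ReflTransGen (fun s s' => tr s none s')

/-- `B` is a branching bisimulation. -/
def IsBranchingBisim (B : S → S → Prop) : Prop :=
  Symmetric B ∧
    ∀ s1 s2, B s1 s2 → ∀ a s1', tr s1 a s1' →
      (a = none ∧ B s1' s2) ∨
      (∃ s2b s2', TauStar tr s2 s2b ∧ tr s2b a s2' ∧ B s1 s2b ∧ B s1' s2')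

/-- Branching bisimilarity `≈_b`. -/
def BrBisim (s1 s2 : S) : Prop :=
  ∃ B, IsBranchingBisim tr B ∧ B s1 s2

/-- `B` is a weak bisimulation. -/
def IsWeakBisim (B : S → S → Prop) : Prop :=
  Symmetric B ∧
    ∀ s1 s2, B s1 s2 →
      (∀ s1', tr s1 none s1' → ∃ s2', TauStar tr s2 s2' ∧ B s1' s2') ∧
      (∀ x s1', tr s1 (some x) s1' →
        ∃ t t' s2', TauStar tr s2 t ∧ tr t (some x) t' ∧ TauStar tr t' s2' ∧ B s1' s2')

/-- Weak bisimilarity `≈`. -/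
def WeakBisim (s1 s2 : S) : Prop :=
  ∃ B, IsWeakBisim tr B ∧ B s1 s2

/-- Reachability via finitely many transitions. -/
def Reach : S → S → Prop :=
  Relation.ReflTransGen (fun s s' => ∃ a, tr s a s')

end LTS

section Security

variable (env : C → Proc A C) (AH : Set A)

/-- `P ∈ BrSNNI` iff `P∖A_H ≈_b P/A_H`. -/
def BrSNNI (p : Proc A C) : Prop :=
  BrBisim (Trans env) (.restrict p AH) (.hide p AH)

/-- All processes reachable from `q` perform only actions in `AH`. -/
def HighOnly (q : Proc A C) : Prop :=
  ∀ q', Reach (Trans env) q q' → ∀ a q'', Trans env q' a q'' → ∃ h ∈ AH, a = some h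

/-- `P ∈ BrNDC` iff `P∖A_H ≈_b ((P ∥_L Q)/L)∖A_H` for every high-level `Q`
and every `L ⊆ A_H`. -/
def BrNDC (p : Proc A C) : Prop :=
  ∀ q, HighOnly env AH q → ∀ L, L ⊆ AH →
    BrBisim (Trans env) (.restrict p AH) (.restrict (.hide (.par L p q) L) AH)

/-- `P ∈ SBrSNNI` iff every reachable process is BrSNNI. -/
def SBrSNNI (p : Proc A C) : Prop :=
  ∀ p', Reach (Trans env) p p' → BrSNNI env AH p'

/-- `P ∈ P_BrNDC` iff every reachable process is BrNDC. -/
def PBrNDC (p : Proc A C) : Prop :=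
  ∀ p', Reach (Trans env) p p' → BrNDC env AH p'

/-- `P ∈ SBrNDC` iff for every reachable `P'` and every high transition
`P' --h→ P''`, `P'∖A_H ≈_b P''∖A_H`. -/
def SBrNDC (p : Proc A C) : Prop :=
  ∀ p' p'', Reach (Trans env) p p' → ∀ h ∈ AH, Trans env p' (some h) p'' →
    BrBisim (Trans env) (.restrict p' AH) (.restrict p'' AH)

/-- `P ∈ BSNNI` iff `P∖A_H ≈ P/A_H`. -/
def BSNNI (p : Proc A C) : Prop :=
  WeakBisim (Trans env) (.restrict p AH) (.hide p AH)

/-- `P ∈ BNDC` iff `P∖A_H ≈ ((P ∥_L Q)/L)∖A_H` for every high-level `Q`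
and every `L ⊆ A_H`. -/
def BNDC (p : Proc A C) : Prop :=
  ∀ q, HighOnly env AH q → ∀ L, L ⊆ AH →
    WeakBisim (Trans env) (.restrict p AH) (.restrict (.hide (.par L p q) L) AH)

/-- `P ∈ SBSNNI` iff every reachable process is BSNNI. -/
def SBSNNI (p : Proc A C) : Prop :=
  ∀ p', Reach (Trans env) p p' → BSNNI env AH p'

/-- `P ∈ P_BNDC` iff every reachable process is BNDC. -/
def PBNDC (p : Proc A C) : Prop :=
  ∀ p', Reach (Trans env) p p' → BNDC env AH p'

/-- `P ∈ SBNDC` iff for every reachable `P'` and every high transition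
`P' --h→ P''`, `P'∖A_H ≈ P''∖A_H`. -/
def SBNDC (p : Proc A C) : Prop :=
  ∀ p' p'', Reach (Trans env) p p' → ∀ h ∈ AH, Trans env p' (some h) p'' →
    WeakBisim (Trans env) (.restrict p' AH) (.restrict p'' AH)

/-- No high-level actions occur in `p`: no process reachable from `p`
can perform a high-level action. -/
def NoHigh (p : Proc A C) : Prop :=
  ∀ p', Reach (Trans env) p p' → ∀ h ∈ AH, ∀ p'', ¬ Trans env p' (some h) p''

end Security

section ParHelpers

variable {A C : Type} (env : C → Proc A C)

lemma res_inv {p : Proc A C} {L : Set A} {a q} (h : Trans env (.restrict p L) a q) :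
    ∃ p', q = .restrict p' L ∧ Trans env p a p' ∧ ∀ x, a = some x → x ∉ L := by
  cases h with
  | res h hn => exact ⟨_, rfl, h, hn⟩

lemma hide_inv {p : Proc A C} {L : Set A} {a q} (h : Trans env (.hide p L) a q) :
    ∃ p' b, q = .hide p' L ∧ Trans env p b p' ∧
      ((a = b ∧ ∀ x, b = some x → x ∉ L) ∨ (a = none ∧ ∃ x ∈ L, b = some x)) := by
  cases h with
  | hideIn h hx => exact ⟨_, _, rfl, h, Or.inr ⟨rfl, _, hx, rfl⟩⟩
  | hideOut h hn => exact ⟨_, _, rfl, h, Or.inl ⟨rfl, hn⟩⟩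

/-- Hidden-τ steps: either a real τ or an action in `AH`. -/
def HTau (AH : Set A) (u v : Proc A C) : Prop :=
  Trans env u none v ∨ ∃ h ∈ AH, Trans env u (some h) v

lemma tauStar_res_inv {p : Proc A C} {L : Set A} {s}
    (h : TauStar (Trans env) (.restrict p L) s) :
    ∃ p', s = .restrict p' L ∧
      Relation.ReflTransGen (fun u v => Trans env u none v) p p' := by
  induction h with
  | refl => exact ⟨p, rfl, .refl⟩
  | tail _ hstep ih =>
    obtain ⟨p', rfl, hp⟩ := ih
    obtain ⟨p'', rfl, h', _⟩ := res_inv env hstep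
    exact ⟨p'', rfl, hp.tail h'⟩

lemma tauStar_hide_inv {p : Proc A C} {AH : Set A} {s}
    (h : TauStar (Trans env) (.hide p AH) s) :
    ∃ p', s = .hide p' AH ∧ Relation.ReflTransGen (HTau env AH) p p' := by
  induction h with
  | refl => exact ⟨p, rfl, .refl⟩
  | tail _ hstep ih =>
    obtain ⟨p', rfl, hp⟩ := ih
    obtain ⟨p'', b, rfl, h', hc⟩ := hide_inv env hstep
    refine ⟨p'', rfl, hp.tail ?_⟩
    rcases hc with ⟨ha, _⟩ | ⟨_, x, hx, rfl⟩
    · rw [← ha] at h'; exact Or.inl h'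
    · exact Or.inr ⟨x, hx, h'⟩

lemma lift_res_left {L AH : Set A} {p p' : Proc A C} (q : Proc A C)
    (h : Relation.ReflTransGen (fun u v => Trans env u none v) p p') :
    TauStar (Trans env) (.restrict (.par L p q) AH) (.restrict (.par L p' q) AH) := by
  induction h with
  | refl => exact .refl
  | tail _ hstep ih =>
    exact ih.tail (.res (.parL hstep (fun x h => nomatch h)) (fun x h => nomatch h))

lemma lift_res_right {L AH : Set A} {p p' : Proc A C} (q : Proc A C)
    (h : Relation.ReflTransGen (fun u v => Trans env u none v) p p') :
    TauStar (Trans env) (.restrict (.par L q p) AH) (.restrict (.par L q p') AH) := by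
  induction h with
  | refl => exact .refl
  | tail _ hstep ih =>
    exact ih.tail (.res (.parR hstep (fun x h => nomatch h)) (fun x h => nomatch h))

lemma lift_hide_left {L AH : Set A} (hL : ∀ x ∈ L, x ∉ AH) {p p' : Proc A C}
    (q : Proc A C) (h : Relation.ReflTransGen (HTau env AH) p p') :
    TauStar (Trans env) (.hide (.par L p q) AH) (.hide (.par L p' q) AH) := by
  induction h with
  | refl => exact .refl
  | tail _ hstep ih =>
    refine ih.tail ?_
    rcases hstep with htau | ⟨x, hx, htr⟩
    · exact .hideOut (.parL htau (fun x h => nomatch h)) (fun x h => nomatch h)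
    · refine .hideIn (.parL htr (fun y hy => ?_)) hx
      cases hy; exact fun hm => hL _ hm hx

lemma lift_hide_right {L AH : Set A} (hL : ∀ x ∈ L, x ∉ AH) {p p' : Proc A C}
    (q : Proc A C) (h : Relation.ReflTransGen (HTau env AH) p p') :
    TauStar (Trans env) (.hide (.par L q p) AH) (.hide (.par L q p') AH) := by
  induction h with
  | refl => exact .refl
  | tail _ hstep ih =>
    refine ih.tail ?_
    rcases hstep with htau | ⟨x, hx, htr⟩
    · exact .hideOut (.parR htau (fun x h => nomatch h)) (fun x h => nomatch h)
    · refine .hideIn (.parR htr (fun y hy => ?_)) hx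
      cases hy; exact fun hm => hL _ hm hx

/-- The pairs forming the candidate branching bisimulation. -/
def GoodPair (AH L : Set A) (s t : Proc A C) : Prop :=
  ∃ q1 q2 r1 r2 : Proc A C,
    s = .restrict (.par L q1 q2) AH ∧ t = .hide (.par L r1 r2) AH ∧
    BrBisim (Trans env) (.restrict q1 AH) (.hide r1 AH) ∧
    BrBisim (Trans env) (.restrict q2 AH) (.hide r2 AH)

lemma good_forward {AH L : Set A} (hL : ∀ x ∈ L, x ∉ AH) {s1 s2 : Proc A C}
    (hg : GoodPair env AH L s1 s2) {a s1'} (htr : Trans env s1 a s1') :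
    (a = none ∧ GoodPair env AH L s1' s2) ∨
    ∃ s2b s2', TauStar (Trans env) s2 s2b ∧ Trans env s2b a s2' ∧
      GoodPair env AH L s1 s2b ∧ GoodPair env AH L s1' s2' := by
  obtain ⟨q1, q2, r1, r2, rfl, rfl, hb1, hb2⟩ := hg
  obtain ⟨p', rfl, hpar, hnAH⟩ := res_inv env htr
  cases hpar with
  | @parL _ _ _ _ q1' h hnL =>
    obtain ⟨B1, hB1, hq1r1⟩ := hb1
    rcases hB1.2 _ _ hq1r1 a _ (Trans.res h hnAH) with ⟨rfl, hB'⟩ |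
        ⟨s2b, s2', hts, hstep, hmid, hfin⟩
    · exact Or.inl ⟨rfl, _, _, _, _, rfl, rfl, ⟨B1, hB1, hB'⟩, hb2⟩
    · obtain ⟨r1b, rfl, hr⟩ := tauStar_hide_inv env hts
      obtain ⟨r1', b, rfl, hr1, hc⟩ := hide_inv env hstep
      refine Or.inr ⟨_, _, lift_hide_left env hL r2 hr, ?_,
        ⟨_, _, _, _, rfl, rfl, ⟨B1, hB1, hmid⟩, hb2⟩,
        ⟨_, _, _, _, rfl, rfl, ⟨B1, hB1, hfin⟩, hb2⟩⟩
      rcases hc with ⟨rfl, hbn⟩ | ⟨rfl, x, hx, rfl⟩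
      · exact .hideOut (.parL hr1 hnL) hbn
      · refine .hideIn (.parL hr1 (fun y hy => ?_)) hx
        cases hy; exact fun hm => hL _ hm hx
  | @parR _ _ _ _ q2' h hnL =>
    obtain ⟨B2, hB2, hq2r2⟩ := hb2
    rcases hB2.2 _ _ hq2r2 a _ (Trans.res h hnAH) with ⟨rfl, hB'⟩ |
        ⟨s2b, s2', hts, hstep, hmid, hfin⟩
    · exact Or.inl ⟨rfl, _, _, _, _, rfl, rfl, hb1, ⟨B2, hB2, hB'⟩⟩
    · obtain ⟨r2b, rfl, hr⟩ := tauStar_hide_inv env hts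
      obtain ⟨r2', b, rfl, hr2, hc⟩ := hide_inv env hstep
      refine Or.inr ⟨_, _, lift_hide_right env hL r1 hr, ?_,
        ⟨_, _, _, _, rfl, rfl, hb1, ⟨B2, hB2, hmid⟩⟩,
        ⟨_, _, _, _, rfl, rfl, hb1, ⟨B2, hB2, hfin⟩⟩⟩
      rcases hc with ⟨rfl, hbn⟩ | ⟨rfl, x, hx, rfl⟩
      · exact .hideOut (.parR hr2 hnL) hbn
      · refine .hideIn (.parR hr2 (fun y hy => ?_)) hx
        cases hy; exact fun hm => hL _ hm hx
  | @sync _ _ _ x q1' q2' h1 h2 hx =>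
    obtain ⟨B1, hB1, hq1r1⟩ := hb1
    obtain ⟨B2, hB2, hq2r2⟩ := hb2
    rcases hB1.2 _ _ hq1r1 _ _ (Trans.res h1 hnAH) with ⟨h, _⟩ |
        ⟨t1b, t1', hts1, hstep1, hmid1, hfin1⟩
    · exact nomatch h
    rcases hB2.2 _ _ hq2r2 _ _ (Trans.res h2 hnAH) with ⟨h, _⟩ |
        ⟨t2b, t2', hts2, hstep2, hmid2, hfin2⟩
    · exact nomatch h
    obtain ⟨r1b, rfl, hr1s⟩ := tauStar_hide_inv env hts1
    obtain ⟨r1', b1, rfl, hr1, hc1⟩ := hide_inv env hstep1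
    obtain ⟨r2b, rfl, hr2s⟩ := tauStar_hide_inv env hts2
    obtain ⟨r2', b2, rfl, hr2, hc2⟩ := hide_inv env hstep2
    have hb1x : b1 = some x := by
      rcases hc1 with ⟨h, _⟩ | ⟨h, _⟩
      · exact h.symm
      · exact nomatch h
    have hb2x : b2 = some x := by
      rcases hc2 with ⟨h, _⟩ | ⟨h, _⟩
      · exact h.symm
      · exact nomatch h
    subst hb1x; subst hb2x
    refine Or.inr ⟨_, _,
      Relation.ReflTransGen.trans (lift_hide_left env hL r2 hr1s)
        (lift_hide_right env hL r1b hr2s),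
      .hideOut (.sync hr1 hr2 hx) hnAH,
      ⟨_, _, _, _, rfl, rfl, ⟨B1, hB1, hmid1⟩, ⟨B2, hB2, hmid2⟩⟩,
      ⟨_, _, _, _, rfl, rfl, ⟨B1, hB1, hfin1⟩, ⟨B2, hB2, hfin2⟩⟩⟩

lemma good_backward {AH L : Set A} (hL : ∀ x ∈ L, x ∉ AH) {s1 s2 : Proc A C}
    (hg : GoodPair env AH L s2 s1) {a s1'} (htr : Trans env s1 a s1') :
    (a = none ∧ GoodPair env AH L s2 s1') ∨
    ∃ s2b s2', TauStar (Trans env) s2 s2b ∧ Trans env s2b a s2' ∧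
      GoodPair env AH L s2b s1 ∧ GoodPair env AH L s2' s1' := by
  obtain ⟨q1, q2, r1, r2, rfl, rfl, hb1, hb2⟩ := hg
  obtain ⟨p'', b, rfl, hpar, hc⟩ := hide_inv env htr
  cases hpar with
  | @parL _ _ _ _ r1' h hnL =>
    have hstep1 : Trans env (.hide r1 AH) a (.hide r1' AH) := by
      rcases hc with ⟨rfl, hbn⟩ | ⟨rfl, x, hx, rfl⟩
      · exact .hideOut h hbn
      · exact .hideIn h hx
    obtain ⟨B1, hB1, hq1r1⟩ := hb1
    rcases hB1.2 _ _ (hB1.1 hq1r1) a _ hstep1 with ⟨rfl, hB'⟩ |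
        ⟨s2b, s2', hts, hstep, hmid, hfin⟩
    · exact Or.inl ⟨rfl, _, _, _, _, rfl, rfl, ⟨B1, hB1, hB1.1 hB'⟩, hb2⟩
    · obtain ⟨q1b, rfl, hq⟩ := tauStar_res_inv env hts
      obtain ⟨q1', rfl, hq1, hnAH'⟩ := res_inv env hstep
      have hnL' : ∀ x, a = some x → x ∉ L := by
        rcases hc with ⟨rfl, _⟩ | ⟨rfl, _⟩
        · exact hnL
        · exact fun x h => nomatch h
      exact Or.inr ⟨_, _, lift_res_left env q2 hq,
        .res (.parL hq1 hnL') hnAH',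
        ⟨_, _, _, _, rfl, rfl, ⟨B1, hB1, hB1.1 hmid⟩, hb2⟩,
        ⟨_, _, _, _, rfl, rfl, ⟨B1, hB1, hB1.1 hfin⟩, hb2⟩⟩
  | @parR _ _ _ _ r2' h hnL =>
    have hstep2 : Trans env (.hide r2 AH) a (.hide r2' AH) := by
      rcases hc with ⟨rfl, hbn⟩ | ⟨rfl, x, hx, rfl⟩
      · exact .hideOut h hbn
      · exact .hideIn h hx
    obtain ⟨B2, hB2, hq2r2⟩ := hb2
    rcases hB2.2 _ _ (hB2.1 hq2r2) a _ hstep2 with ⟨rfl, hB'⟩ |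
        ⟨s2b, s2', hts, hstep, hmid, hfin⟩
    · exact Or.inl ⟨rfl, _, _, _, _, rfl, rfl, hb1, ⟨B2, hB2, hB2.1 hB'⟩⟩
    · obtain ⟨q2b, rfl, hq⟩ := tauStar_res_inv env hts
      obtain ⟨q2', rfl, hq2, hnAH'⟩ := res_inv env hstep
      have hnL' : ∀ x, a = some x → x ∉ L := by
        rcases hc with ⟨rfl, _⟩ | ⟨rfl, _⟩
        · exact hnL
        · exact fun x h => nomatch h
      exact Or.inr ⟨_, _, lift_res_right env q1 hq,
        .res (.parR hq2 hnL') hnAH',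
        ⟨_, _, _, _, rfl, rfl, hb1, ⟨B2, hB2, hB2.1 hmid⟩⟩,
        ⟨_, _, _, _, rfl, rfl, hb1, ⟨B2, hB2, hB2.1 hfin⟩⟩⟩
  | @sync _ _ _ x r1' r2' h1 h2 hx =>
    have hxAH : x ∉ AH := hL _ hx
    have hax : a = some x := by
      rcases hc with ⟨rfl, _⟩ | ⟨rfl, y, hy, hb⟩
      · rfl
      · cases hb; exact absurd hy hxAH
    subst hax
    have hnAH : ∀ y, (some x : Option A) = some y → y ∉ AH := by
      rintro y hy; cases hy; exact hxAH
    obtain ⟨B1, hB1, hq1r1⟩ := hb1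
    obtain ⟨B2, hB2, hq2r2⟩ := hb2
    rcases hB1.2 _ _ (hB1.1 hq1r1) _ _ (Trans.hideOut h1 hnAH) with ⟨h, _⟩ |
        ⟨t1b, t1', hts1, hstep1, hmid1, hfin1⟩
    · exact nomatch h
    rcases hB2.2 _ _ (hB2.1 hq2r2) _ _ (Trans.hideOut h2 hnAH) with ⟨h, _⟩ |
        ⟨t2b, t2', hts2, hstep2, hmid2, hfin2⟩
    · exact nomatch h
    obtain ⟨q1b, rfl, hq1s⟩ := tauStar_res_inv env hts1
    obtain ⟨q1', rfl, hq1, _⟩ := res_inv env hstep1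
    obtain ⟨q2b, rfl, hq2s⟩ := tauStar_res_inv env hts2
    obtain ⟨q2', rfl, hq2, _⟩ := res_inv env hstep2
    exact Or.inr ⟨_, _,
      Relation.ReflTransGen.trans (lift_res_left env q2 hq1s)
        (lift_res_right env q1b hq2s),
      .res (.sync hq1 hq2 hx) hnAH,
      ⟨_, _, _, _, rfl, rfl, ⟨B1, hB1, hB1.1 hmid1⟩, ⟨B2, hB2, hB2.1 hmid2⟩⟩,
      ⟨_, _, _, _, rfl, rfl, ⟨B1, hB1, hB1.1 hfin1⟩, ⟨B2, hB2, hB2.1 hfin2⟩⟩⟩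

end ParHelpers

/-- Lemma 4.3(1). -/
theorem sbrsnni_par_restrict_hide {A C : Type} (env : C → Proc A C)
    (hguard : ∀ c, Guarded (env c)) (AH : Set A) (P1 P2 : Proc A C)
    (h1 : SBrSNNI env AH P1) (h2 : SBrSNNI env AH P2)
    (L : Set A) (hL : ∀ x ∈ L, x ∉ AH) :
    ∀ Q1 R1 Q2 R2 : Proc A C,
      Reach (Trans env) P1 Q1 → Reach (Trans env) P1 R1 →
      Reach (Trans env) P2 Q2 → Reach (Trans env) P2 R2 →
      Reach (Trans env) (Proc.par L P1 P2) (Proc.par L Q1 Q2) →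
      Reach (Trans env) (Proc.par L P1 P2) (Proc.par L R1 R2) →
      BrBisim (Trans env) (Proc.restrict Q1 AH) (Proc.hide R1 AH) →
      BrBisim (Trans env) (Proc.restrict Q2 AH) (Proc.hide R2 AH) →
      BrBisim (Trans env) (Proc.restrict (Proc.par L Q1 Q2) AH)
        (Proc.hide (Proc.par L R1 R2) AH) := by
  intro Q1 R1 Q2 R2 _ _ _ _ _ _ hb1 hb2
  refine ⟨fun s t => GoodPair env AH L s t ∨ GoodPair env AH L t s,
    ⟨fun s t h => h.symm, ?_⟩, Or.inl ⟨Q1, Q2, R1, R2, rfl, rfl, hb1, hb2⟩⟩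
  rintro s1 s2 (hg | hg) a s1' htr
  · rcases good_forward env hL hg htr with ⟨rfl, hg'⟩ | ⟨s2b, s2', t1, t2, t3, t4⟩
    · exact Or.inl ⟨rfl, Or.inl hg'⟩
    · exact Or.inr ⟨s2b, s2', t1, t2, Or.inl t3, Or.inl t4⟩
  · rcases good_backward env hL hg htr with ⟨rfl, hg'⟩ | ⟨s2b, s2', t1, t2, t3, t4⟩
    · exact Or.inl ⟨rfl, Or.inr hg'⟩
    · exact Or.inr ⟨s2b, s2', t1, t2, Or.inr t3, Or.inr t4⟩

end SecurityNI
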